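/- Let A be a d×d random matrix and X, Y ∈ ℝ^{d×d} with ‖X‖_F = ‖Y‖_F = 1, such that u := ⟨A,X⟩ and v := ⟨A,Y⟩ are jointly Gaussian N(0,1) with correlation ρ = ⟨X,Y⟩, and let s be independent of A. Then E[Sign(⟨A,X⟩+s)·⟨A,Y⟩] = √(2/π)·E[exp(-s²/2)]·⟨X,Y⟩. -/

import Mathlib

open MeasureTheory ProbabilityTheory

/-- The sign function: `Sign x = x / |x|` for `x ≠ 0`, `Sign 0 = 0`. -/
noncomputable def signFun (x : ℝ) : ℝ := if x = 0 then 0 else x / |x|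

/-- The trace (Frobenius) inner product `⟨X,Y⟩ = Tr(Xᵀ Y) = ∑ᵢⱼ Xᵢⱼ Yᵢⱼ`. -/
noncomputable def frobInner {d : ℕ} (X Y : Matrix (Fin d) (Fin d) ℝ) : ℝ :=
  ∑ i, ∑ j, X i j * Y i j

/-- The Frobenius norm. -/
noncomputable def frobNorm {d : ℕ} (X : Matrix (Fin d) (Fin d) ℝ) : ℝ :=
  Real.sqrt (frobInner X X)

section
open Real Set Filter

lemma measurable_signFun : Measurable signFun := by
  unfold signFun
  exact Measurable.ite (measurableSet_eq) measurable_const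
    (measurable_id.div measurable_id.abs)

lemma abs_signFun_le (x : ℝ) : |signFun x| ≤ 1 := by
  unfold signFun
  rcases eq_or_ne x 0 with h | h
  · simp [h]
  · rw [if_neg h, abs_div, abs_abs, div_self (abs_ne_zero.mpr h)]

lemma signFun_of_pos {x : ℝ} (h : 0 < x) : signFun x = 1 := by
  rw [signFun, if_neg h.ne', abs_of_pos h, div_self h.ne']

lemma signFun_of_neg {x : ℝ} (h : x < 0) : signFun x = -1 := by
  rw [signFun, if_neg h.ne, abs_of_neg h, div_neg, div_self h.ne]

noncomputable def gc : ℝ := (Real.sqrt (2 * Real.pi))⁻¹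

lemma hasDerivAt_negexp (x : ℝ) :
    HasDerivAt (fun y : ℝ => -(gc * Real.exp (-y ^ 2 / 2)))
      (x * (gc * Real.exp (-x ^ 2 / 2))) x := by
  have h1 : HasDerivAt (fun y : ℝ => -y ^ 2 / 2) (-x) x := by
    have h := ((hasDerivAt_pow 2 x).neg.div_const 2)
    exact h.congr_deriv (by norm_num; ring)
  have h2 := ((h1.exp).const_mul gc).neg
  exact h2.congr_deriv (by ring)

lemma tendsto_negexp_atTop :
    Tendsto (fun y : ℝ => -(gc * Real.exp (-y ^ 2 / 2))) atTop (nhds 0) := by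
  have h1 : Tendsto (fun y : ℝ => -y ^ 2 / 2) atTop atBot := by
    apply Tendsto.atBot_div_const (by norm_num : (0:ℝ) < 2)
    exact tendsto_neg_atTop_atBot.comp (tendsto_pow_atTop two_ne_zero)
  have := ((Real.tendsto_exp_atBot.comp h1).const_mul gc).neg
  simpa using this

lemma tendsto_negexp_atBot :
    Tendsto (fun y : ℝ => -(gc * Real.exp (-y ^ 2 / 2))) atBot (nhds 0) := by
  have := tendsto_negexp_atTop.comp tendsto_neg_atBot_atTop
  convert this using 2 with y
  simp [Function.comp]

lemma integrable_xexp : Integrable (fun x : ℝ => x * (gc * Real.exp (-x ^ 2 / 2))) := by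
  have h := (integrable_mul_exp_neg_mul_sq (b := (1:ℝ)/2) (by norm_num)).const_mul gc
  have he : (fun x : ℝ => x * (gc * Real.exp (-x ^ 2 / 2)))
      = fun x => gc * (x * Real.exp (-(1/2) * x ^ 2)) := by
    funext x
    rw [show -x ^ 2 / 2 = -(1/2) * x ^ 2 by ring]
    ring
  rw [he]; exact h

lemma int_Ioi (a : ℝ) :
    ∫ x in Ioi a, x * (gc * Real.exp (-x ^ 2 / 2)) = gc * Real.exp (-a ^ 2 / 2) := by
  have := integral_Ioi_of_hasDerivAt_of_tendsto' (a := a) (m := 0)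
    (fun x _ => hasDerivAt_negexp x) integrable_xexp.integrableOn tendsto_negexp_atTop
  simpa using this

lemma int_Iic (a : ℝ) :
    ∫ x in Iic a, x * (gc * Real.exp (-x ^ 2 / 2)) = -(gc * Real.exp (-a ^ 2 / 2)) := by
  have := integral_Iic_of_hasDerivAt_of_tendsto' (a := a) (m := 0)
    (fun x _ => hasDerivAt_negexp x) integrable_xexp.integrableOn tendsto_negexp_atBot
  simpa using this

lemma pdf01 (x : ℝ) : gaussianPDFReal 0 1 x = gc * Real.exp (-x ^ 2 / 2) := by
  simp [gaussianPDFReal, gc]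

lemma integral_gaussianReal_eq (g : ℝ → ℝ) :
    ∫ x, g x ∂(gaussianReal 0 1) = ∫ x, gaussianPDFReal 0 1 x * g x := by
  rw [gaussianReal_of_var_ne_zero 0 one_ne_zero]
  have h : gaussianPDF 0 1 = fun x => ((gaussianPDFReal 0 1 x).toNNReal : ENNReal) := by
    funext x; simp [gaussianPDF, ENNReal.ofReal]
  rw [h, integral_withDensity_eq_integral_smul
    ((measurable_gaussianPDFReal 0 1).real_toNNReal) g]
  congr 1
  funext x
  simp [NNReal.smul_def, Real.coe_toNNReal _ (gaussianPDFReal_nonneg 0 1 x)]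

lemma integrable_id_gaussianReal : Integrable (fun x => x) (gaussianReal 0 1) := by
  rw [gaussianReal_of_var_ne_zero 0 one_ne_zero]
  have h : gaussianPDF 0 1 = fun x => ((gaussianPDFReal 0 1 x).toNNReal : ENNReal) := by
    funext x; simp [gaussianPDF, ENNReal.ofReal]
  rw [h, integrable_withDensity_iff_integrable_smul
    ((measurable_gaussianPDFReal 0 1).real_toNNReal)]
  have he : (fun x : ℝ => (gaussianPDFReal 0 1 x).toNNReal • x)
      = fun x => x * (gc * Real.exp (-x ^ 2 / 2)) := by
    funext x
    rw [NNReal.smul_def, smul_eq_mul, Real.coe_toNNReal _ (gaussianPDFReal_nonneg 0 1 x), pdf01]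
    ring
  rw [he]
  exact integrable_xexp

lemma integral_id_gaussianReal : ∫ x, x ∂(gaussianReal 0 1) = 0 := by
  rw [integral_gaussianReal_eq]
  have he : (fun x : ℝ => gaussianPDFReal 0 1 x * x)
      = fun x => x * (gc * Real.exp (-x ^ 2 / 2)) := by
    funext x; rw [pdf01]; ring
  rw [he, ← intervalIntegral.integral_Iic_add_Ioi (b := 0) integrable_xexp.integrableOn integrable_xexp.integrableOn, int_Iic, int_Ioi]
  ring

lemma sqrt_two_div_pi : Real.sqrt (2 / Real.pi) = 2 * gc := by
  have hπ : (0:ℝ) < Real.pi := Real.pi_pos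
  have h4 : (2:ℝ) / Real.pi = 4 / (2 * Real.pi) := by
    rw [div_eq_div_iff hπ.ne' (by positivity : (2 * Real.pi) ≠ 0)]
    ring
  rw [h4, Real.sqrt_div (by norm_num : (0:ℝ) ≤ 4), show (4:ℝ) = 2 ^ 2 by norm_num,
    Real.sqrt_sq (by norm_num : (0:ℝ) ≤ 2), gc, div_eq_mul_inv]

lemma gauss_sign (t : ℝ) :
    ∫ x, signFun (x + t) * x ∂(gaussianReal 0 1)
      = Real.sqrt (2 / Real.pi) * Real.exp (-t ^ 2 / 2) := by
  rw [integral_gaussianReal_eq]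
  have hint : Integrable (fun x : ℝ => gaussianPDFReal 0 1 x * (signFun (x + t) * x)) := by
    refine integrable_xexp.abs.mono' ?_ (ae_of_all _ fun x => ?_)
    · exact ((measurable_gaussianPDFReal 0 1).mul
        ((measurable_signFun.comp (measurable_id.add_const t)).mul measurable_id)).aestronglyMeasurable
    · have h1 : |gc * Real.exp (-x ^ 2 / 2)| = gc * Real.exp (-x ^ 2 / 2) := by
        refine abs_of_nonneg (mul_nonneg ?_ (Real.exp_nonneg _))
        exact inv_nonneg.mpr (Real.sqrt_nonneg _)
      rw [Real.norm_eq_abs, pdf01, abs_mul, h1, abs_mul]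
      calc (gc * Real.exp (-x ^ 2 / 2)) * (|signFun (x + t)| * |x|)
          ≤ (gc * Real.exp (-x ^ 2 / 2)) * (1 * |x|) := by
            refine mul_le_mul_of_nonneg_left (mul_le_mul_of_nonneg_right (abs_signFun_le _)
              (abs_nonneg _)) (mul_nonneg (inv_nonneg.mpr (Real.sqrt_nonneg _)) (Real.exp_nonneg _))
        _ = |x * (gc * Real.exp (-x ^ 2 / 2))| := by
            rw [abs_mul, h1]; ring
  rw [← intervalIntegral.integral_Iic_add_Ioi (b := -t) hint.integrableOn hint.integrableOn]
  have hIoi : ∫ x in Ioi (-t), gaussianPDFReal 0 1 x * (signFun (x + t) * x)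
      = gc * Real.exp (-t ^ 2 / 2) := by
    rw [setIntegral_congr_fun measurableSet_Ioi (g := fun x => x * (gc * Real.exp (-x ^ 2 / 2)))
      (fun x hx => by
        rw [pdf01, signFun_of_pos (by simpa [neg_lt_iff_pos_add] using hx : 0 < x + t)]
        ring)]
    rw [int_Ioi]
    congr 1
    rw [neg_pow]
    ring_nf
  have hIic : ∫ x in Iic (-t), gaussianPDFReal 0 1 x * (signFun (x + t) * x)
      = gc * Real.exp (-t ^ 2 / 2) := by
    rw [integral_Iic_eq_integral_Iio]
    rw [setIntegral_congr_fun measurableSet_Iio (g := fun x => -(x * (gc * Real.exp (-x ^ 2 / 2))))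
      (fun x hx => by
        rw [pdf01, signFun_of_neg (by simpa [lt_neg_iff_add_neg] using hx : x + t < 0)]
        ring)]
    rw [integral_neg, ← integral_Iic_eq_integral_Iio, int_Iic, neg_neg]
    congr 1
    rw [neg_pow]
    ring_nf
  rw [hIoi, hIic, sqrt_two_div_pi]
  ring

end

open Real Set Filter

/-- Let `A` be a random matrix and `X, Y` fixed unit-Frobenius-norm matrices such that
`u = ⟨A,X⟩` and `v = ⟨A,Y⟩` are jointly Gaussian `N(0,1)` with correlation `ρ = ⟨X,Y⟩`
(joint Gaussianity encoded via `⟨A,Y⟩ = ρ⟨A,X⟩ + √(1-ρ²) w` with `w` standard Gaussian),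
and let `s` be independent of `A`.  Then
`E[Sign(⟨A,X⟩+s)·⟨A,Y⟩] = √(2/π) · E[exp(-s²/2)] · ⟨X,Y⟩`. -/

theorem sign_gaussian_matrix_expectation
    {Ω : Type*} [MeasurableSpace Ω] (μ : Measure Ω) [IsProbabilityMeasure μ]
    {d : ℕ} (A : Ω → Matrix (Fin d) (Fin d) ℝ) (s w : Ω → ℝ)
    (X Y : Matrix (Fin d) (Fin d) ℝ)
    (hX : frobNorm X = 1) (hY : frobNorm Y = 1)
    (ρ : ℝ) (hρ : ρ = frobInner X Y)
    (hum : Measurable fun ω => frobInner (A ω) X)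
    (hwm : Measurable w) (hsm : Measurable s)
    (hu : μ.map (fun ω => frobInner (A ω) X) = gaussianReal 0 1)
    (hw : μ.map w = gaussianReal 0 1)
    (hvdec : ∀ ω, frobInner (A ω) Y
      = ρ * frobInner (A ω) X + Real.sqrt (1 - ρ ^ 2) * w ω)
    (hind : iIndepFun
      ![fun ω => frobInner (A ω) X, w, s] μ) :
    ∫ ω, signFun (frobInner (A ω) X + s ω) * frobInner (A ω) Y ∂μ
      = Real.sqrt (2 / Real.pi) * (∫ ω, Real.exp (-(s ω) ^ 2 / 2) ∂μ) * frobInner X Y := by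
  set u : Ω → ℝ := fun ω => frobInner (A ω) X with hu_def
  have hmeas3 : ∀ i, Measurable (![u, w, s] i) := by
    intro i
    fin_cases i
    · exact hum
    · exact hwm
    · exact hsm
  -- integrability of u and w
  have hui : Integrable u μ := by
    have h : Integrable (fun x => x) (μ.map u) := by rw [hu]; exact integrable_id_gaussianReal
    exact (integrable_map_measure aestronglyMeasurable_id hum.aemeasurable).mp h
  have hwi : Integrable w μ := by
    have h : Integrable (fun x => x) (μ.map w) := by rw [hw]; exact integrable_id_gaussianReal
    exact (integrable_map_measure aestronglyMeasurable_id hwm.aemeasurable).mp h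
  have hsgn_meas : Measurable (fun ω => signFun (u ω + s ω)) :=
    measurable_signFun.comp (hum.add hsm)
  have hbound : ∀ {f : Ω → ℝ}, Integrable f μ → Measurable f →
      Integrable (fun ω => signFun (u ω + s ω) * f ω) μ := by
    intro f hf hfm
    refine hf.abs.mono' ((hsgn_meas.mul hfm).aestronglyMeasurable) (ae_of_all _ fun ω => ?_)
    rw [Real.norm_eq_abs, abs_mul]
    calc |signFun (u ω + s ω)| * |f ω| ≤ 1 * |f ω| :=
          mul_le_mul_of_nonneg_right (abs_signFun_le _) (abs_nonneg _)
      _ = |f ω| := one_mul _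
  have hint1 : Integrable (fun ω => signFun (u ω + s ω) * u ω) μ := hbound hui hum
  have hint2 : Integrable (fun ω => signFun (u ω + s ω) * w ω) μ := hbound hwi hwm
  -- decompose the integrand
  have hsplit : ∫ ω, signFun (u ω + s ω) * frobInner (A ω) Y ∂μ
      = ρ * (∫ ω, signFun (u ω + s ω) * u ω ∂μ)
        + Real.sqrt (1 - ρ ^ 2) * (∫ ω, signFun (u ω + s ω) * w ω ∂μ) := by
    rw [← integral_const_mul, ← integral_const_mul,
      ← integral_add ((hint1.const_mul ρ)) ((hint2.const_mul _))]
    congr 1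
    funext ω
    rw [hvdec ω]
    ring
  -- second term vanishes
  have hI2 : ∫ ω, signFun (u ω + s ω) * w ω ∂μ = 0 := by
    have hpair : IndepFun (fun ω => (u ω, s ω)) w μ := by
      have h := hind.indepFun_prodMk hmeas3 0 2 1 (by decide) (by decide)
      simpa using h
    have hIndep : IndepFun (fun ω => signFun (u ω + s ω)) w μ := by
      have h := hpair.comp (φ := fun p : ℝ × ℝ => signFun (p.1 + p.2)) (ψ := id)
        (measurable_signFun.comp (measurable_fst.add measurable_snd)) measurable_id
      exact h
    have hsgnInt : Integrable (fun ω => signFun (u ω + s ω)) μ := by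
      refine (integrable_const (1:ℝ)).mono' hsgn_meas.aestronglyMeasurable
        (ae_of_all _ fun ω => ?_)
      simpa [Real.norm_eq_abs] using abs_signFun_le (u ω + s ω)
    have hEw : ∫ ω, w ω ∂μ = 0 := by
      have h := integral_map (f := fun x : ℝ => x) hwm.aemeasurable
        (by rw [hw]; exact aestronglyMeasurable_id)
      rw [hw, _root_.integral_id_gaussianReal] at h
      exact h.symm
    have h := hIndep.integral_mul_eq_mul_integral hsgnInt.aestronglyMeasurable hwi.aestronglyMeasurable
    rw [hEw, mul_zero] at h
    simpa [Pi.mul_apply] using h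
  -- first term
  have hI1 : ∫ ω, signFun (u ω + s ω) * u ω ∂μ
      = Real.sqrt (2 / Real.pi) * ∫ ω, Real.exp (-(s ω) ^ 2 / 2) ∂μ := by
    have hus : IndepFun u s μ := by
      have h := hind.indepFun (show (0 : Fin 3) ≠ 2 by decide)
      simpa using h
    have hmap : μ.map (fun ω => (u ω, s ω)) = (gaussianReal 0 1).prod (μ.map s) := by
      rw [← hu]
      exact (indepFun_iff_map_prod_eq_prod_map_map hum.aemeasurable hsm.aemeasurable).mp hus
    have hνp : IsProbabilityMeasure (μ.map s) := Measure.isProbabilityMeasure_map hsm.aemeasurable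
    have hFmeas : Measurable (fun p : ℝ × ℝ => signFun (p.1 + p.2) * p.1) :=
      (measurable_signFun.comp (measurable_fst.add measurable_snd)).mul measurable_fst
    have hFint : Integrable (fun p : ℝ × ℝ => signFun (p.1 + p.2) * p.1)
        ((gaussianReal 0 1).prod (μ.map s)) := by
      have h1 : Integrable (fun p : ℝ × ℝ => |p.1| * 1)
          ((gaussianReal 0 1).prod (μ.map s)) :=
        integrable_id_gaussianReal.abs.mul_prod (integrable_const 1)
      refine h1.mono' hFmeas.aestronglyMeasurable (ae_of_all _ fun p => ?_)
      rw [Real.norm_eq_abs, abs_mul, mul_one]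
      calc |signFun (p.1 + p.2)| * |p.1| ≤ 1 * |p.1| :=
            mul_le_mul_of_nonneg_right (abs_signFun_le _) (abs_nonneg _)
        _ = |p.1| := one_mul _
    have hstep : ∫ ω, signFun (u ω + s ω) * u ω ∂μ
        = ∫ p : ℝ × ℝ, signFun (p.1 + p.2) * p.1 ∂((gaussianReal 0 1).prod (μ.map s)) := by
      rw [← hmap, integral_map (hum.prodMk hsm).aemeasurable
        (by rw [hmap]; exact hFmeas.aestronglyMeasurable)]
    rw [hstep, MeasureTheory.integral_prod_symm _ hFint]
    have hinner : ∀ t : ℝ, ∫ x, signFun (x + t) * x ∂(gaussianReal 0 1)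
        = Real.sqrt (2 / Real.pi) * Real.exp (-t ^ 2 / 2) := gauss_sign
    calc ∫ t, ∫ x, signFun (x + t) * x ∂(gaussianReal 0 1) ∂(μ.map s)
        = ∫ t, Real.sqrt (2 / Real.pi) * Real.exp (-t ^ 2 / 2) ∂(μ.map s) := by
          congr 1; funext t; exact hinner t
      _ = Real.sqrt (2 / Real.pi) * ∫ t, Real.exp (-t ^ 2 / 2) ∂(μ.map s) := by
          rw [integral_const_mul]
      _ = Real.sqrt (2 / Real.pi) * ∫ ω, Real.exp (-(s ω) ^ 2 / 2) ∂μ := by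
          congr 1
          exact integral_map hsm.aemeasurable
            (Continuous.aestronglyMeasurable (by continuity))
  rw [hsplit, hI1, hI2, hρ]
  ring
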